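/- Let a and F be random variables on a probability space with 0 ≤ a ≤ F almost surely, F > 0 almost surely, and F integrable, and set V := E[F]. Let α ∈ (0,1]. If E[a/F] ≥ α and P[F ≤ V/4] ≤ α/2, then E[a] ≥ (α/16) · V. -/

import Mathlib

open MeasureTheory

/-- Let `a, F` be random variables with `0 ≤ a ≤ F` a.s., `F > 0` a.s.,
`F` integrable, and `V := E[F]`. Let `α ∈ (0,1]`. If `E[a/F] ≥ α` and `P[F ≤ V/4] ≤ α/2`,
then `E[a] ≥ (α/16)·V`. -/
theorem eor_to_roe_core
    {Ω : Type*} [MeasurableSpace Ω] (μ : Measure Ω) [IsProbabilityMeasure μ]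
    (a F : Ω → ℝ)
    (hann : ∀ᵐ ω ∂μ, 0 ≤ a ω) (haF : ∀ᵐ ω ∂μ, a ω ≤ F ω)
    (hFpos : ∀ᵐ ω ∂μ, 0 < F ω) (hFint : Integrable F μ)
    (V : ℝ) (hV : V = ∫ ω, F ω ∂μ)
    (α : ℝ) (hα : α ∈ Set.Ioc (0 : ℝ) 1)
    (hratio : α ≤ ∫ ω, a ω / F ω ∂μ)
    (htail : (μ {ω | F ω ≤ V / 4}).toReal ≤ α / 2) :
    (α / 16) * V ≤ ∫ ω, a ω ∂μ := by
  obtain ⟨hα0, hα1⟩ := hα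
  set g : Ω → ℝ := fun ω => a ω / F ω with hg_def
  -- V ≥ 0
  have hV0 : 0 ≤ V := by
    rw [hV]
    exact integral_nonneg_of_ae (hFpos.mono fun ω h => h.le)
  -- g integrable
  have hg_int : Integrable g μ := by
    by_contra h
    rw [integral_undef h] at hratio
    linarith
  -- a = g * F a.e.
  have haeq : a =ᵐ[μ] fun ω => g ω * F ω := by
    filter_upwards [hFpos] with ω hω
    simp [hg_def, div_mul_cancel₀ _ hω.ne']
  -- a integrable
  have ha_meas : AEStronglyMeasurable a μ :=
    (hg_int.aestronglyMeasurable.mul hFint.aestronglyMeasurable).congr haeq.symm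
  have ha_int : Integrable a μ := by
    refine hFint.mono' ha_meas ?_
    filter_upwards [hann, haF] with ω h1 h2
    rw [Real.norm_eq_abs, abs_of_nonneg h1]; exact h2
  -- measurable version of F
  obtain ⟨F', hF'meas, hFF'⟩ := hFint.aestronglyMeasurable
  have hS : MeasurableSet {ω | F' ω ≤ V / 4} := by
    exact measurableSet_le hF'meas.measurable measurable_const
  set S := {ω | F' ω ≤ V / 4} with hS_def
  have hμS : (μ S).toReal ≤ α / 2 := by
    have : μ S = μ {ω | F ω ≤ V / 4} := by
      apply measure_congr
      filter_upwards [hFF'] with ω hω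
      change (F' ω ≤ V / 4) = (F ω ≤ V / 4)
      rw [hω]
    rw [this]; exact htail
  -- the comparison function
  set φ : Ω → ℝ := fun ω => (V / 4) * g ω - (V / 4) * S.indicator (fun _ => (1:ℝ)) ω
    with hφ_def
  have hind_int : Integrable (S.indicator (fun _ => (1:ℝ))) μ :=
    (integrable_const (1:ℝ)).indicator hS
  have hφ_int : Integrable φ μ := (hg_int.const_mul _).sub (hind_int.const_mul _)
  -- φ ≤ a a.e.
  have hφ_le : φ ≤ᵐ[μ] a := by
    filter_upwards [hann, haF, hFpos, hFF'] with ω h1 h2 h3 h4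
    have hg0 : 0 ≤ g ω := div_nonneg h1 h3.le
    have hg1 : g ω ≤ 1 := (div_le_one h3).mpr h2
    by_cases hω : ω ∈ S
    · simp only [hφ_def, Set.indicator_of_mem hω]
      nlinarith
    · simp only [hφ_def, Set.indicator_of_notMem hω]
      have hF4 : V / 4 ≤ F ω := by
        have : ¬ F' ω ≤ V / 4 := hω
        rw [← h4] at this; linarith
      have : (V / 4) * g ω ≤ F ω * g ω := mul_le_mul_of_nonneg_right hF4 hg0
      have heq : F ω * g ω = a ω := by
        simp [hg_def, mul_div_cancel₀ _ h3.ne']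
      simpa [heq] using this
  have h1 : ∫ ω, φ ω ∂μ ≤ ∫ ω, a ω ∂μ := integral_mono_ae hφ_int ha_int hφ_le
  have h2 : ∫ ω, φ ω ∂μ
      = (V / 4) * (∫ ω, g ω ∂μ) - (V / 4) * (μ S).toReal := by
    simp only [hφ_def]
    rw [integral_sub (hg_int.const_mul _) (hind_int.const_mul _),
      integral_const_mul, integral_const_mul, integral_indicator_const _ hS]
    simp [Measure.real]
  have hgint : α ≤ ∫ ω, g ω ∂μ := hratio
  nlinarith [integral_nonneg_of_ae (μ := μ) (f := g)
    ((hann.and (hFpos)).mono fun ω h => div_nonneg h.1 h.2.le)]
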